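/- For every continuous function f : X → ℂ one has S̃ ∘ M̃_f = M̃_{f∘T} ∘ S̃ and S̃* ∘ M̃_f ∘ S̃ = M̃_{L(f)} as bounded operators on ℓ²(X×ℤ), where L(f) = ℒ(1)⁻¹·ℒ(f) is the transfer operator. -/

import Mathlib

open Classical

noncomputable section

/-- `ℓ²(X×ℤ)`: the Hilbert space of square-summable complex families indexed by `X × ℤ`. -/
abbrev l2Z (X : Type*) : Type _ := lp (fun _ : X × ℤ => ℂ) 2

/-- The orthonormal basis vector `e_{(x,n)}` of `ℓ²(X×ℤ)`. -/
def e {X : Type*} (p : X × ℤ) : l2Z X := lp.single 2 p 1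

/-- The normalized transfer operator
`L(f)(x) = ℒ(1)(x)⁻¹ · ∑_{y ∈ T⁻¹({x})} f(y)`, where `ℒ(1)(x) = card (T⁻¹({x}))`. -/
def transferOp {X : Type*} (T : X → X) (f : X → ℂ) (x : X) : ℂ :=
  (Nat.card (T ⁻¹' {x}) : ℂ)⁻¹ * ∑ᶠ y ∈ T ⁻¹' {x}, f y

end

noncomputable section AuxCT

open scoped InnerProductSpace

variable {X : Type*}

lemma e_single (p : X × ℤ) (cc : ℂ) : lp.single 2 p cc = cc • e p := by
  have h := lp.single_smul (E := fun _ : X × ℤ => ℂ) (𝕜 := ℂ) 2 p cc (1 : ℂ)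
  simpa [e, smul_eq_mul] using h

lemma clm_ext_e (A B : l2Z X →L[ℂ] l2Z X) (h : ∀ p, A (e p) = B (e p)) : A = B := by
  refine ContinuousLinearMap.ext fun v => ?_
  have hv : HasSum (fun p : X × ℤ => lp.single 2 p (v p)) v :=
    lp.hasSum_single (by norm_num) v
  have hfun : (fun p : X × ℤ => A (lp.single 2 p (v p)))
      = fun p => B (lp.single 2 p (v p)) := by
    funext p
    rw [e_single, map_smul, map_smul, h]
  exact (hv.mapL A).unique (hfun ▸ hv.mapL B)

lemma inner_e_left (q : X × ℤ) (v : l2Z X) : ⟪e q, v⟫_ℂ = v q := by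
  simp [e, lp.inner_single_left]

lemma e_apply (p q : X × ℤ) : (e p : ∀ _ : X × ℤ, ℂ) q = if q = p then 1 else 0 := by
  by_cases h : q = p
  · subst h; simp [e, lp.single_apply_self]
  · simp [e, lp.single_apply_ne _ _ _ h, h]

lemma finsum_fin {M : Type*} [AddCommMonoid M] {s : Set X} (hs : s.Finite) (g : X → M) :
    (∑ᶠ y ∈ s, g y) = ∑ y ∈ hs.toFinset, g y := by
  rw [← finsum_mem_coe_finset, Set.Finite.coe_toFinset]

end AuxCT

open scoped InnerProductSpace

open ContinuousLinearMap in
/-- Let `X` be a compact Hausdorff space, `T : X → X` a covering map and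
`S̃` the bounded operator on `ℓ²(X×ℤ)` with
`S̃ e_{(x,n)} = (ℒ(1)(x))^{-1/2} ∑_{y ∈ T⁻¹({x})} e_{(y,n+1)}`. For every continuous
`f : X → ℂ` one has `S̃ ∘ M̃_f = M̃_{f∘T} ∘ S̃` and `S̃* ∘ M̃_f ∘ S̃ = M̃_{L(f)}`, where
`L(f) = ℒ(1)⁻¹·ℒ(f)` is the transfer operator and `M̃_g` denotes the (unique) bounded
operator with `M̃_g e_{(x,n)} = g(x) e_{(x,n)}`. -/
theorem covariance_and_transfer_tilde {X : Type*} [TopologicalSpace X] [CompactSpace X]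
    [T2Space X] (T : X → X) (hT : IsCoveringMap T) (hTsurj : Function.Surjective T)
    (St : l2Z X →L[ℂ] l2Z X)
    (hSt : ∀ (x : X) (n : ℤ), St (e (x, n)) =
      (((Real.sqrt (Nat.card (T ⁻¹' {x})))⁻¹ : ℝ) : ℂ) • ∑ᶠ y ∈ T ⁻¹' {x}, e (y, n + 1)) :
    ∀ f : C(X, ℂ), ∀ Mf MfT ML : l2Z X →L[ℂ] l2Z X,
      (∀ p : X × ℤ, Mf (e p) = f p.1 • e p) →
      (∀ p : X × ℤ, MfT (e p) = f (T p.1) • e p) →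
      (∀ p : X × ℤ, ML (e p) = transferOp T f p.1 • e p) →
      St ∘L Mf = MfT ∘L St ∧ (adjoint St) ∘L Mf ∘L St = ML := by
  classical
  intro f Mf MfT ML hMf hMfT hML
  have hTc : Continuous T := hT.continuous
  have hfin : ∀ x : X, (T ⁻¹' {x}).Finite := fun x =>
    ((isClosed_singleton.preimage hTc).isCompact).finite (isDiscrete_iff_discreteTopology.mpr (hT x).1)
  set s : X → Finset X := fun x => (hfin x).toFinset with hs
  have hmem : ∀ {x y : X}, y ∈ s x ↔ T y = x := by
    intro x y
    simp [hs, Set.Finite.mem_toFinset]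
  set c : X → ℂ := fun x => (((Real.sqrt (Nat.card (T ⁻¹' {x})))⁻¹ : ℝ) : ℂ) with hc
  have hSt' : ∀ (x : X) (n : ℤ), St (e (x, n)) = c x • ∑ y ∈ s x, e (y, n + 1) := by
    intro x n
    rw [hSt, finsum_fin (hfin x)]
  have hNpos : ∀ x : X, 0 < Nat.card (T ⁻¹' {x}) := by
    intro x
    obtain ⟨y, hy⟩ := hTsurj x
    have hne : (T ⁻¹' {x}).Nonempty := ⟨y, by simp [hy]⟩
    haveI := hne.to_subtype
    haveI := (hfin x).to_subtype
    exact Nat.card_pos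
  have hcc : ∀ x : X, c x * c x = ((Nat.card (T ⁻¹' {x}) : ℂ))⁻¹ := by
    intro x
    have h0 : (0:ℝ) ≤ ((Nat.card (T ⁻¹' {x}) : ℝ)) := Nat.cast_nonneg _
    have h1 : ((Real.sqrt (Nat.card (T ⁻¹' {x})))⁻¹ * (Real.sqrt (Nat.card (T ⁻¹' {x})))⁻¹ : ℝ)
        = ((Nat.card (T ⁻¹' {x}) : ℝ))⁻¹ := by
      rw [← mul_inv, Real.mul_self_sqrt h0]
    have h2 := congrArg (fun r : ℝ => (r : ℂ)) h1
    simpa [hc, Complex.ofReal_mul, Complex.ofReal_inv] using h2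
  constructor
  · apply clm_ext_e
    intro p
    obtain ⟨x, n⟩ := p
    have hcong : ∀ y ∈ s x, MfT (e (y, n + 1)) = f x • e (y, n + 1) := by
      intro y hy
      rw [hMfT (y, n + 1)]
      simp only
      rw [hmem.mp hy]
    calc (St ∘L Mf) (e (x, n)) = f x • (c x • ∑ y ∈ s x, e (y, n + 1)) := by
          rw [ContinuousLinearMap.comp_apply, hMf (x, n), map_smul, hSt']
      _ = (MfT ∘L St) (e (x, n)) := by
          rw [ContinuousLinearMap.comp_apply, hSt', map_smul, map_sum,
            Finset.sum_congr rfl hcong, ← Finset.smul_sum, smul_comm]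
  · have hadj : ∀ (y : X) (m : ℤ), adjoint St (e (y, m)) = c (T y) • e (T y, m - 1) := by
      intro y m
      refine lp.ext (funext fun q => ?_)
      obtain ⟨z, k⟩ := q
      have hL : (adjoint St (e (y, m)) : ∀ _ : X × ℤ, ℂ) (z, k)
          = ⟪St (e (z, k)), e (y, m)⟫_ℂ := by
        rw [← inner_e_left (z, k), ContinuousLinearMap.adjoint_inner_right]
      have hR : ((c (T y) • e (T y, m - 1) : l2Z X) : ∀ _ : X × ℤ, ℂ) (z, k)
          = c (T y) * (if (z, k) = (T y, m - 1) then 1 else 0) := by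
        rw [lp.coeFn_smul, Pi.smul_apply, smul_eq_mul, e_apply]
      rw [hL, hR, hSt' z k, inner_smul_left, sum_inner]
      have hconj : (starRingEnd ℂ) (c z) = c z := by
        rw [hc]; exact Complex.conj_ofReal _
      rw [hconj]
      have hterm : ∀ w, ⟪e (w, k + 1), e (y, m)⟫_ℂ = if (w, k + 1) = (y, m) then 1 else 0 := by
        intro w
        rw [inner_e_left, e_apply]
      simp only [hterm]
      by_cases hk : k + 1 = m
      · have hk' : k = m - 1 := by omega
        subst hk'
        by_cases hz : z = T y
        · subst hz
          have hy' : y ∈ s (T y) := hmem.mpr rfl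
          have : ∀ w ∈ s (T y), (if ((w : X), m - 1 + 1) = (y, m) then (1:ℂ) else 0)
              = if w = y then 1 else 0 := by
            intro w _
            congr 1
            simp [Prod.ext_iff, hk]
          rw [Finset.sum_congr rfl this, Finset.sum_ite_eq' (s (T y)) y (fun _ => (1:ℂ))]
          simp [hy']
        · have hzero : ∀ w ∈ s z, (if ((w : X), m - 1 + 1) = (y, m) then (1:ℂ) else 0) = 0 := by
            intro w hw
            have : w ≠ y := fun h => hz ((hmem.mp hw).symm.trans (congrArg T h))
            simp [Prod.ext_iff, this]
          rw [Finset.sum_congr rfl hzero]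
          simp [Prod.ext_iff, hz]
      · have hzero : ∀ w ∈ s z, (if ((w : X), k + 1) = (y, m) then (1:ℂ) else 0) = 0 := by
          intro w _
          simp [Prod.ext_iff, hk]
        rw [Finset.sum_congr rfl hzero]
        have : ((z, k) : X × ℤ) ≠ (T y, m - 1) := by
          intro h
          apply hk
          have := (Prod.ext_iff.mp h).2
          omega
        simp [this]
    apply clm_ext_e
    intro p
    obtain ⟨x, n⟩ := p
    have key : ∀ y ∈ s x, adjoint St (f y • e (y, n + 1)) = (f y * c x) • e (x, n) := by
      intro y hy
      rw [map_smul, hadj y (n + 1), hmem.mp hy, smul_smul,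
        show n + 1 - 1 = n from by ring]
    have hMsum : Mf (∑ y ∈ s x, e (y, n + 1)) = ∑ y ∈ s x, f y • e (y, n + 1) := by
      rw [map_sum]
      exact Finset.sum_congr rfl fun y _ => hMf (y, n + 1)
    have hAsum : adjoint St (∑ y ∈ s x, f y • e (y, n + 1))
        = ((∑ y ∈ s x, f y) * c x) • e (x, n) := by
      rw [map_sum, Finset.sum_congr rfl key, ← Finset.sum_smul, Finset.sum_mul]
    rw [ContinuousLinearMap.comp_apply, ContinuousLinearMap.comp_apply, hSt' x n,
      map_smul, hMsum, map_smul, hAsum, smul_smul, hML (x, n)]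
    congr 1
    simp only [transferOp]
    rw [finsum_fin (hfin x) f]
    rw [← hcc x]
    ring
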